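/- arXiv:0802.3372 — 2 statements merged into one kernel-verified Lean document; each statement's English description precedes it below -/
import Mathlib

section
/- For the (p-1)×(p-1) tridiagonal matrix M_p with first diagonal entry -p-2, remaining diagonal entries -2, and off-diagonal entries 1, the cokernel of the induced map ℤ^(p-1) → ℤ^(p-1) is a cyclic group of order p². -/
/-- The intersection matrix of the rational blow-down configuration `C_p`:
the `(p-1) × (p-1)` tridiagonal matrix with diagonal `(-p-2, -2, …, -2)`
and off-diagonal entries `1`. -/
def Mp (p : ℕ) : Matrix (Fin (p - 1)) (Fin (p - 1)) ℤ := fun i j =>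
  if i = j then (if i.val = 0 then -(p + 2) else -2)
  else if i.val + 1 = j.val ∨ j.val + 1 = i.val then 1 else 0

lemma sum_ite_val {n : ℕ} (v : Fin n → ℤ) (m : ℕ) :
    (∑ j : Fin n, if j.val = m then v j else 0) = if h : m < n then v ⟨m, h⟩ else 0 := by
  split_ifs with h
  · rw [Finset.sum_eq_single_of_mem ⟨m, h⟩ (Finset.mem_univ _)]
    · simp
    · intro b _ hb; rw [if_neg]; simpa [Fin.ext_iff] using hb
  · apply Finset.sum_eq_zero; intro j _
    have := j.isLt
    rw [if_neg (by omega)]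

lemma Mp_mulVec (p : ℕ) (v : Fin (p - 1) → ℤ) (i : Fin (p - 1)) :
    (Mp p).mulVec v i =
      (if i.val = 0 then -((p : ℤ) + 2) else -2) * v i
      + (if h : i.val + 1 < p - 1 then v ⟨i.val + 1, h⟩ else 0)
      + (if h : 0 < i.val then v ⟨i.val - 1, lt_of_le_of_lt (Nat.sub_le _ _) i.isLt⟩ else 0) := by
  classical
  have hpoint : ∀ j : Fin (p - 1), Mp p i j * v j =
      (if j = i then (if i.val = 0 then -((p : ℤ) + 2) else -2) * v i else 0)
      + ((if j.val = i.val + 1 then v j else 0)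
      + (if j.val + 1 = i.val then v j else 0)) := by
    intro j
    unfold Mp
    rcases eq_or_ne i j with rfl | hne
    · simp
    · rw [if_neg hne, if_neg (Ne.symm hne)]
      have hne' : i.val ≠ j.val := fun h => hne (Fin.ext h)
      split_ifs <;> simp_all <;> omega
  show (∑ j, Mp p i j * v j) = _
  rw [Finset.sum_congr rfl (fun j _ => hpoint j), Finset.sum_add_distrib,
    Finset.sum_add_distrib, Finset.sum_ite_eq' Finset.univ i, sum_ite_val]
  have h3 : (∑ j : Fin (p-1), if j.val + 1 = i.val then v j else 0)
      = if h : 0 < i.val then v ⟨i.val - 1, lt_of_le_of_lt (Nat.sub_le _ _) i.isLt⟩ else 0 := by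
    split_ifs with h
    · rw [Finset.sum_eq_single_of_mem ⟨i.val - 1, lt_of_le_of_lt (Nat.sub_le _ _) i.isLt⟩
        (Finset.mem_univ _)]
      · simp only [Fin.val_mk]; rw [if_pos (by omega)]
      · intro b _ hb; rw [if_neg]
        exact fun hc => hb (Fin.ext (show b.val = i.val - 1 by omega))
    · apply Finset.sum_eq_zero; intro j _; rw [if_neg]; omega
  rw [h3, add_assoc, if_pos (Finset.mem_univ i)]

lemma Mp_symm (p : ℕ) (i j : Fin (p - 1)) : Mp p i j = Mp p j i := by
  unfold Mp
  rcases eq_or_ne i j with rfl | hne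
  · rfl
  · rw [if_neg hne, if_neg (Ne.symm hne)]; split_ifs <;> tauto

/-- coefficients of the linear functional -/
def cc (p : ℕ) (i : Fin (p - 1)) : ℤ := 1 + ((p : ℤ) + 1) * i.val

lemma factA (p : ℕ) (hp : 2 ≤ p) (j : Fin (p - 1)) :
    (∑ i, cc p i * Mp p i j) = if j.val = p - 2 then -(p : ℤ) ^ 2 else 0 := by
  have h1 : (∑ i, cc p i * Mp p i j) = (Mp p).mulVec (cc p) j := by
    show _ = ∑ i, Mp p j i * cc p i
    exact Finset.sum_congr rfl fun i _ => by rw [Mp_symm p j i, mul_comm]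
  rw [h1, Mp_mulVec]
  have hj := j.isLt
  unfold cc
  split_ifs <;> (try simp only [Fin.val_mk]) <;> (try omega)
  next h1 h2 h3 h4 =>
    have e0 : ((j : ℕ) : ℤ) = 0 := by exact_mod_cast h1
    push_cast
    rw [e0]; ring
  next h1 h2 h3 h4 =>
    have hp2 : p = 2 := by omega
    subst hp2
    have e0 : ((j : ℕ) : ℤ) = 0 := by exact_mod_cast h1
    rw [e0]; norm_num
  next h1 h2 h3 h4 =>
    push_cast [Nat.cast_sub (show 1 ≤ j.val from h3)]
    ring
  next h1 h2 h3 h4 =>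
    have ej : ((j : ℕ) : ℤ) = (p : ℤ) - 2 := by omega
    push_cast [Nat.cast_sub (show 1 ≤ j.val from h3)]
    rw [ej]; ring

/-- particular solution with `M xv = p² e₀` -/
def xv (p : ℕ) (i : Fin (p - 1)) : ℤ := (i.val : ℤ) + 1 - p

lemma factB (p : ℕ) (hp : 2 ≤ p) (i : Fin (p - 1)) :
    (Mp p).mulVec (xv p) i = if i.val = 0 then (p : ℤ) ^ 2 else 0 := by
  rw [Mp_mulVec]
  have hi := i.isLt
  unfold xv
  split_ifs <;> (try simp only [Fin.val_mk]) <;> (try omega)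
  next h1 h2 h3 =>
    have e0 : ((i : ℕ) : ℤ) = 0 := by exact_mod_cast h1
    push_cast
    rw [e0]; ring
  next h1 h2 h3 =>
    have hp2 : p = 2 := by omega
    subst hp2
    have e0 : ((i : ℕ) : ℤ) = 0 := by exact_mod_cast h1
    rw [e0]; norm_num

/-- solutions with `M (wv j) = e_j - c_j e₀` -/
def wv (p : ℕ) (j : Fin (p - 1)) (i : Fin (p - 1)) : ℤ :=
  if i.val ≤ j.val then (j.val : ℤ) - i.val else 0

lemma factC (p : ℕ) (hp : 2 ≤ p) (j i : Fin (p - 1)) :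
    (Mp p).mulVec (wv p j) i
      = (if i = j then 1 else 0) - cc p j * (if i.val = 0 then 1 else 0) := by
  rw [Mp_mulVec]
  have hi := i.isLt
  have hj := j.isLt
  have hij : (i = j) ↔ (i.val = j.val) := Fin.ext_iff
  unfold wv cc
  split_ifs <;> (try simp only [Fin.val_mk]) <;> (try omega) <;> (try simp_all) <;> (try omega) <;> (try ring)

/-- The cokernel of `M_p : ℤ^(p-1) → ℤ^(p-1)` is cyclic of order `p²`. -/
theorem coker_Mp (p : ℕ) (hp : 2 ≤ p) :
    Nonempty (((Fin (p - 1) → ℤ) ⧸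
      (LinearMap.range (Matrix.toLin' (Mp p))).toAddSubgroup) ≃+ ZMod (p ^ 2)) := by
  classical
  haveI : NeZero (p ^ 2) := ⟨pow_ne_zero 2 (by omega)⟩
  set R := (LinearMap.range (Matrix.toLin' (Mp p))).toAddSubgroup with hR
  let φ : (Fin (p - 1) → ℤ) →+ ZMod (p ^ 2) :=
    AddMonoidHom.mk' (fun v => ((∑ i, cc p i * v i : ℤ) : ZMod (p ^ 2)))
      (fun a b => by
        rw [← Int.cast_add, ← Finset.sum_add_distrib]
        exact congrArg _ (Finset.sum_congr rfl fun i _ => by simp [mul_add]))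
  have h00 : 0 < p - 1 := by omega
  set i0 : Fin (p - 1) := ⟨0, h00⟩ with hi0
  have hsurj : Function.Surjective φ := by
    intro z
    obtain ⟨z', rfl⟩ := ZMod.intCast_surjective z
    refine ⟨Pi.single i0 z', ?_⟩
    have hs : (∑ i, cc p i * (Pi.single i0 z' : Fin (p - 1) → ℤ) i) = cc p i0 * z' := by
      rw [Finset.sum_eq_single i0]
      · rw [Pi.single_eq_same]
      · intro b _ hb; rw [Pi.single_eq_of_ne hb, mul_zero]
      · intro h; exact absurd (Finset.mem_univ _) h
    show ((∑ i, cc p i * (Pi.single i0 z' : Fin (p - 1) → ℤ) i : ℤ) : ZMod (p ^ 2)) = ((z' : ℤ) : ZMod (p ^ 2))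
    rw [hs]
    simp [cc, hi0]
  have hker : R = φ.ker := by
    ext v
    simp only [hR, Submodule.mem_toAddSubgroup, LinearMap.mem_range, AddMonoidHom.mem_ker]
    constructor
    · rintro ⟨u, rfl⟩
      show ((∑ i, cc p i * (Matrix.toLin' (Mp p) u) i : ℤ) : ZMod (p ^ 2)) = 0
      simp only [Matrix.toLin'_apply]
      have hsum : (∑ i, cc p i * ((Mp p).mulVec u) i)
          = ∑ j, (∑ i, cc p i * Mp p i j) * u j := by
        simp only [Matrix.mulVec, dotProduct, Finset.mul_sum, Finset.sum_mul]
        rw [Finset.sum_comm]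
        exact Finset.sum_congr rfl fun j _ => Finset.sum_congr rfl fun i _ => by ring
      rw [hsum, Finset.sum_congr rfl fun j _ => by rw [factA p hp j], Int.cast_sum]
      apply Finset.sum_eq_zero
      intro j _
      split_ifs
      · push_cast
        have hz : (p : ZMod (p ^ 2)) ^ 2 = 0 := by
          rw [← Nat.cast_pow, ZMod.natCast_self]
        rw [hz]
        ring
      · rw [zero_mul, Int.cast_zero]
    · intro hv
      have hdvd : ((p ^ 2 : ℕ) : ℤ) ∣ ∑ i, cc p i * v i := by
        rw [← ZMod.intCast_zmod_eq_zero_iff_dvd]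
        exact hv
      obtain ⟨k, hk⟩ := hdvd
      refine ⟨(∑ j, v j • wv p j) + k • xv p, ?_⟩
      rw [map_add, map_sum, map_smul]
      funext i
      simp only [Pi.add_apply, Finset.sum_apply, Pi.smul_apply, smul_eq_mul,
        map_smul, Matrix.toLin'_apply]
      rw [Finset.sum_congr rfl fun j _ => by rw [factC p hp j i], factB p hp i]
      simp only [mul_sub]
      rw [Finset.sum_sub_distrib]
      have h1 : ∑ j, v j * (if i = j then 1 else 0) = v i := by
        simp [mul_ite, Finset.sum_ite_eq]
      by_cases h0 : i.val = 0
      · simp only [if_pos h0, mul_one]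
        have h2 : ∑ j, v j * cc p j = ∑ j, cc p j * v j :=
          Finset.sum_congr rfl fun j _ => mul_comm _ _
        rw [h1, h2, hk]
        push_cast
        ring
      · simp only [if_neg h0, mul_zero, Finset.sum_const_zero, sub_zero, add_zero]
        exact h1
  exact ⟨(QuotientAddGroup.quotientAddEquivOfEq hker).trans
    (QuotientAddGroup.quotientKerEquivOfSurjective φ hsurj)⟩
end

section
/- For p ≥ 2 the intersection matrix M_p of C_p is negative definite. -/
/-- The real intersection matrix of `C_p`: the `(p-1) × (p-1)` tridiagonal
matrix with diagonal `(-(p+2), -2, …, -2)` and off-diagonal entries `1`. -/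
def MpR (p : ℕ) : Matrix (Fin (p - 1)) (Fin (p - 1)) ℝ := fun i j =>
  if i = j then (if i.val = 0 then -(p + 2) else -2)
  else if i.val + 1 = j.val ∨ j.val + 1 = i.val then 1 else 0

open Finset in
lemma Mp_key1 (m : ℕ) (y : ℕ → ℝ) :
    2 * ∑ i ∈ range (m+1), (y i)^2 - 2 * ∑ i ∈ range m, y i * y (i+1)
      = (y 0)^2 + (∑ i ∈ range m, (y i - y (i+1))^2) + (y m)^2 := by
  induction m with
  | zero => simp; ring
  | succ k ih =>
    rw [sum_range_succ (fun i => (y i)^2), sum_range_succ (fun i => y i * y (i+1)),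
      sum_range_succ (fun i => (y i - y (i+1))^2)]
    linear_combination ih

open Finset in
lemma Mp_key2 (m : ℕ) (y : ℕ → ℝ)
    (h : ∑ i ∈ range m, (y i - y (i+1))^2 = 0) (hm : y m = 0) :
    ∀ i ≤ m, y i = 0 := by
  have hc : ∀ i ∈ range m, (y i - y (i+1))^2 = 0 :=
    (sum_eq_zero_iff_of_nonneg (fun i _ => sq_nonneg _)).1 h
  have hstep : ∀ i < m, y i = y (i+1) := by
    intro i hi
    have := hc i (mem_range.2 hi)
    nlinarith [this, sq_nonneg (y i - y (i+1))]
  have hall : ∀ k, y (m - k) = 0 := by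
    intro k
    induction k with
    | zero => simpa using hm
    | succ j hj =>
      by_cases h' : j < m
      · have h1 : m - (j+1) < m := by omega
        have h2 : m - (j+1) + 1 = m - j := by omega
        have := hstep (m - (j+1)) h1
        rw [h2] at this
        rw [this]; exact hj
      · have h2 : m - (j+1) = m - j := by omega
        rw [h2]; exact hj
  intro i hi
  have := hall (m - i)
  rwa [Nat.sub_sub_self hi] at this

open Finset in
/-- For `p ≥ 2`, the intersection form of `C_p` is negative definite. -/
theorem Mp_negDef (p : ℕ) (hp : 2 ≤ p) :
    ∀ x : Fin (p - 1) → ℝ, x ≠ 0 → dotProduct x ((MpR p).mulVec x) < 0 := by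
  intro x hx
  obtain ⟨m, hm⟩ : ∃ m, p - 1 = m + 1 := ⟨p - 2, by omega⟩
  set y : ℕ → ℝ := fun i => if h : i < p - 1 then x ⟨i, h⟩ else 0 with hy
  have hxy : ∀ i : Fin (p-1), x i = y i.1 := by
    intro i; simp [hy, i.2]
  have hy0 : ∀ i, p - 1 ≤ i → y i = 0 := by
    intro i h; simp [hy]; omega
  have hinner : ∀ i : Fin (p-1), (MpR p).mulVec x i
      = (if i.1 = 0 then -((p:ℝ)+2) else -2) * y i.1 + y (i.1+1)
        + (if i.1 = 0 then 0 else y (i.1-1)) := by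
    intro i
    have hsplit : ∀ j : Fin (p-1), MpR p i j * x j =
        (if j = i then (if i.1 = 0 then -((p:ℝ)+2) else -2) * x j else 0)
        + (if j.1 = i.1 + 1 then x j else 0) + (if j.1 + 1 = i.1 then x j else 0) := by
      intro j
      simp only [MpR]
      by_cases h1 : i = j
      · subst h1
        simp [show ¬(i.1 = i.1+1) from by omega, show ¬(i.1+1 = i.1) from by omega]
      · have h1' : ¬ j = i := fun h => h1 h.symm
        by_cases h2 : j.1 = i.1 + 1
        · have h3 : ¬ (j.1 + 1 = i.1) := by omega
          rw [if_neg h1, if_pos (Or.inl h2.symm), if_neg h1', if_pos h2, if_neg h3]; ring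
        · by_cases h3 : j.1 + 1 = i.1
          · rw [if_neg h1, if_pos (Or.inr h3), if_neg h1', if_neg h2, if_pos h3]; ring
          · rw [if_neg h1,
              if_neg (fun h => h.elim (fun h' => h2 h'.symm) h3),
              if_neg h1', if_neg h2, if_neg h3]; ring
    have e0 : (MpR p).mulVec x i = ∑ j : Fin (p-1), MpR p i j * x j := rfl
    rw [e0, sum_congr rfl fun j _ => hsplit j, sum_add_distrib, sum_add_distrib]
    have s1 : (∑ j : Fin (p-1), if j = i then
        (if i.1 = 0 then -((p:ℝ)+2) else -2) * x j else 0)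
        = (if i.1 = 0 then -((p:ℝ)+2) else -2) * y i.1 := by
      rw [Finset.sum_ite_eq' Finset.univ i
        (fun j => (if i.1 = 0 then -((p:ℝ)+2) else -2) * x j)]
      simp [hxy i]
    have s2 : (∑ j : Fin (p-1), if j.1 = i.1 + 1 then x j else 0) = y (i.1+1) := by
      by_cases h : i.1 + 1 < p - 1
      · have hcond : ∀ j : Fin (p-1), (j.1 = i.1 + 1) ↔ (j = ⟨i.1+1, h⟩) := by
          intro j; simp [Fin.ext_iff]
        simp_rw [hcond]
        rw [Finset.sum_ite_eq' Finset.univ (⟨i.1+1, h⟩ : Fin (p-1)) x]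
        simp [hy, h]
      · have hz : ∀ j ∈ (Finset.univ : Finset (Fin (p-1))),
            (if j.1 = i.1 + 1 then x j else 0) = 0 := by
          intro j _
          exact if_neg (by have := j.2; omega)
        rw [Finset.sum_eq_zero hz]
        exact (hy0 _ (by omega)).symm
    have s3 : (∑ j : Fin (p-1), if j.1 + 1 = i.1 then x j else 0)
        = (if i.1 = 0 then 0 else y (i.1-1)) := by
      by_cases h : i.1 = 0
      · rw [if_pos h, Finset.sum_eq_zero]
        intro j _
        exact if_neg (by omega)
      · have hlt : i.1 - 1 < p - 1 := by have := i.2; omega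
        have hcond : ∀ j : Fin (p-1), (j.1 + 1 = i.1) ↔ (j = ⟨i.1-1, hlt⟩) := by
          intro j; simp [Fin.ext_iff]; omega
        simp_rw [hcond]
        rw [Finset.sum_ite_eq' Finset.univ (⟨i.1-1, hlt⟩ : Fin (p-1)) x, if_neg h]
        simp [hy, hlt]
    rw [s1, s2, s3]
  set G : ℕ → ℝ := fun i => y i * ((if i = 0 then -((p:ℝ)+2) else -2) * y i
      + y (i+1) + (if i = 0 then 0 else y (i-1))) with hG
  have eQ : dotProduct x ((MpR p).mulVec x) = ∑ i ∈ range (p-1), G i := by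
    rw [← Fin.sum_univ_eq_sum_range]
    unfold dotProduct
    refine sum_congr rfl fun i _ => ?_
    rw [hinner i, hxy i]
  rw [show range (p-1) = range (m+1) from by rw [hm]] at eQ
  rw [eQ, Finset.sum_range_succ']
  have hG0 : G 0 = y 0 * (-((p:ℝ)+2) * y 0 + y 1) := by simp [hG]
  have hGs : ∀ i, G (i+1) = y (i+1) * (-2 * y (i+1) + y (i+2) + y i) := by
    intro i; simp [hG]
  set A := ∑ i ∈ range (m+1), (y i)^2 with hA
  set B := ∑ i ∈ range m, y i * y (i+1) with hB
  have sA : ∑ i ∈ range m, (y (i+1))^2 = A - (y 0)^2 := by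
    rw [hA, Finset.sum_range_succ' (fun i => (y i)^2)]; ring
  have hym1 : y (m+1) = 0 := hy0 _ (by omega)
  have sB : ∑ i ∈ range m, y (i+1) * y (i+2) = B - y 0 * y 1 := by
    have h1 : ∑ i ∈ range (m+1), y i * y (i+1)
        = (∑ i ∈ range m, y (i+1) * y (i+2)) + y 0 * y 1 :=
      Finset.sum_range_succ' (fun i => y i * y (i+1)) m
    have h2 : ∑ i ∈ range (m+1), y i * y (i+1) = B + y m * y (m+1) :=
      Finset.sum_range_succ (fun i => y i * y (i+1)) m
    rw [hym1] at h2
    rw [h2] at h1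
    linarith [h1]
  have sC : ∑ i ∈ range m, y (i+1) * y i = B := by
    rw [hB]; exact sum_congr rfl fun i _ => mul_comm _ _
  have esplit : ∑ i ∈ range m, G (i+1)
      = -2 * (∑ i ∈ range m, (y (i+1))^2) + (∑ i ∈ range m, y (i+1) * y (i+2))
        + (∑ i ∈ range m, y (i+1) * y i) := by
    rw [Finset.mul_sum, ← sum_add_distrib, ← sum_add_distrib]
    refine sum_congr rfl fun i _ => ?_
    rw [hGs i]; ring
  have key := Mp_key1 m y
  have hS : 0 ≤ ∑ i ∈ range m, (y i - y (i+1))^2 :=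
    sum_nonneg fun i _ => sq_nonneg _
  have hE : 0 < ((p:ℝ)+1) * (y 0)^2 + (∑ i ∈ range m, (y i - y (i+1))^2) + (y m)^2 := by
    have h0 : 0 ≤ ((p:ℝ)+1) * (y 0)^2 := by positivity
    rcases lt_or_ge 0 (((p:ℝ)+1) * (y 0)^2 + (∑ i ∈ range m, (y i - y (i+1))^2) + (y m)^2)
      with h | h
    · exact h
    · exfalso
      have hS0 : ∑ i ∈ range m, (y i - y (i+1))^2 = 0 := by
        nlinarith [sq_nonneg (y m)]
      have hym : y m = 0 := by
        have : (y m)^2 = 0 := by nlinarith [sq_nonneg (y m)]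
        exact pow_eq_zero_iff (by norm_num) |>.1 this
      have hall := Mp_key2 m y hS0 hym
      apply hx
      funext j
      have hj : j.1 ≤ m := by have := j.2; omega
      show x j = 0
      rw [hxy j]
      exact hall j.1 hj
  rw [esplit, sA, sB, sC, hG0]
  nlinarith [key, hE]
end
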